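/- Let d be a positive integer and let L ∈ M_{2d−1}(ℝ). Then there is exactly one quadrature rule w : N → (0,∞) for L with #N ≤ d (called the Gaussian quadrature rule for L): such a rule exists, and if w : N → (0,∞) and w' : N' → (0,∞) are quadrature rules for L with #N ≤ d and #N' ≤ d, then N = N' and w = w'. -/

import Mathlib

open MeasureTheory

noncomputable section

/-- The space `ℝ[X]_m` of univariate polynomials of degree at most `m`. -/
def UPolyLE (m : ℕ) : Submodule ℝ (Polynomial ℝ) := Polynomial.degreeLE ℝ (m : ℕ)

/-- A quadrature rule for a linear functional on `ℝ[X]_m`. -/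
def UIsQuadratureRule {m : ℕ} (L : Module.Dual ℝ (UPolyLE m))
    (N : Finset ℝ) (w : ℝ → ℝ) : Prop :=
  (∀ x ∈ N, 0 < w x) ∧
  ∀ p : UPolyLE m, L p = ∑ x ∈ N, w x * (p : Polynomial ℝ).eval x

/-- The truncated moment cone `M_m(ℝ)` for measures on the real line. -/
def UMomentCone (m : ℕ) : Set (Module.Dual ℝ (UPolyLE m)) :=
  {L | ∃ μ : Measure ℝ,
    (∀ p : Polynomial ℝ, p.natDegree ≤ m → Integrable (fun x => p.eval x) μ) ∧
    ∀ p : UPolyLE m, L p = ∫ x, (p : Polynomial ℝ).eval x ∂μ}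

section AuxGQ
open Polynomial


namespace GQaux

lemma monicP (s : Finset ℝ) : (∏ a ∈ s, (X - C a)).Monic :=
  monic_prod_of_monic _ _ (fun a _ => monic_X_sub_C a)

lemma ndegP (s : Finset ℝ) : (∏ a ∈ s, (X - C a)).natDegree = s.card := by
  rw [natDegree_prod _ _ (fun a _ => X_sub_C_ne_zero a)]
  simp

lemma evalP {s : Finset ℝ} {x : ℝ} : eval x (∏ a ∈ s, (X - C a)) = 0 ↔ x ∈ s := by
  simp [eval_prod, Finset.prod_eq_zero_iff, sub_eq_zero, eq_comm]

lemma dvdP {s : Finset ℝ} {p : ℝ[X]} (hp : p ≠ 0) (h : ∀ a ∈ s, eval a p = 0) :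
    (∏ a ∈ s, (X - C a)) ∣ p := by
  have : (Multiset.map (fun a => X - C a) s.val).prod ∣ p := by
    rw [Multiset.prod_X_sub_C_dvd_iff_le_roots hp]
    refine Multiset.le_iff_count.2 fun a => ?_
    by_cases ha : a ∈ s
    · have h1 : Multiset.count a s.val = 1 := Multiset.count_eq_one_of_mem s.nodup (by simpa using ha)
      rw [h1, count_roots]
      exact (Polynomial.rootMultiplicity_pos hp).2 (h a ha)
    · simp [Multiset.count_eq_zero.2 (by rwa [Finset.mem_val])]
  rwa [Finset.prod_eq_multiset_prod] 

lemma vanish_eq_zero {s : Finset ℝ} {p : ℝ[X]} (h : ∀ a ∈ s, eval a p = 0)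
    (hd : p.natDegree < s.card) : p = 0 := by
  by_contra hp
  have := natDegree_le_of_dvd (dvdP hp h) hp
  rw [ndegP] at this
  omega

end GQaux

namespace GQaux2
open Polynomial Filter

lemma pos_somewhere {p : ℝ[X]} (hlc : 0 < p.leadingCoeff) : ∃ y : ℝ, 0 < p.eval y := by
  rcases eq_or_lt_of_le (Nat.zero_le p.natDegree) with h0 | h0
  · refine ⟨0, ?_⟩
    have : p = C (p.coeff 0) := (Polynomial.eq_C_of_natDegree_eq_zero h0.symm)
    rw [this] at hlc ⊢
    simpa using (by simpa using hlc)
  · have hdeg : 0 < p.degree := by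
      rwa [Polynomial.natDegree_pos_iff_degree_pos] at h0
    have := Polynomial.tendsto_atTop_of_leadingCoeff_nonneg p hdeg hlc.le
    obtain ⟨y, hy⟩ := (this.eventually_gt_atTop 0).exists
    exact ⟨y, hy⟩

lemma nonnegP : ∀ n : ℕ, ∀ p : ℝ[X], p.natDegree = n → 0 < p.leadingCoeff →
    (∀ a : ℝ, Even (p.rootMultiplicity a)) → ∀ x : ℝ, 0 ≤ p.eval x := by
  intro n
  induction n using Nat.strong_induction_on with
  | _ n ih =>
    intro p hdeg hlc hmult x
    have hp0 : p ≠ 0 := fun h => by simp [h] at hlc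
    by_cases hroot : ∃ a : ℝ, p.eval a = 0
    · obtain ⟨a, ha⟩ := hroot
      have hm : 0 < rootMultiplicity a p := (rootMultiplicity_pos hp0).2 ha
      obtain ⟨g, hg, hnd⟩ := p.exists_eq_pow_rootMultiplicity_mul_and_not_dvd hp0 a
      set m := rootMultiplicity a p with hmdef
      have hme : Even m := hmult a
      have hg0 : g ≠ 0 := by rintro rfl; rw [mul_zero] at hg; exact hp0 hg
      have hlcg : 0 < g.leadingCoeff := by
        rw [hg, leadingCoeff_mul, ((monic_X_sub_C a).pow m).leadingCoeff, one_mul] at hlc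
        exact hlc
      have hga : g.eval a ≠ 0 := fun h => hnd (dvd_iff_isRoot.2 h)
      have hmultg : ∀ b : ℝ, Even (rootMultiplicity b g) := by
        intro b
        by_cases hb : b = a
        · subst hb
          rw [rootMultiplicity_eq_zero hga]
          exact Even.zero
        · have hmul := rootMultiplicity_mul (x := b) (by rw [← hg]; exact hp0)
          have hXa : rootMultiplicity b ((X - C a) ^ m) = 0 := by
            apply rootMultiplicity_eq_zero
            simp [sub_eq_zero, hb]
          rw [hXa, zero_add] at hmul
          rw [← hmul, ← hg]
          exact hmult b
      have hdg : g.natDegree < n := by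
        have hnd2 : p.natDegree = m + g.natDegree := by
          rw [hg, natDegree_mul (pow_ne_zero m (X_sub_C_ne_zero a)) hg0, natDegree_pow, natDegree_X_sub_C, mul_one]
        omega
      have hgx := ih g.natDegree hdg g rfl hlcg hmultg x
      rw [hg, eval_mul, eval_pow, eval_sub, eval_X, eval_C]
      exact mul_nonneg (hme.pow_nonneg _) hgx
    · push_neg at hroot
      by_contra hneg
      push_neg at hneg
      obtain ⟨y, hy⟩ := pos_somewhere hlc
      have hcont : Continuous fun t : ℝ => p.eval t := p.continuous
      rcases le_total x y with hxy | hxy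
      · have := intermediate_value_Icc hxy hcont.continuousOn (a := x) (b := y)
          ⟨hneg.le, hy.le⟩
        obtain ⟨z, _, hz⟩ := this
        exact hroot z hz
      · have := intermediate_value_Icc' hxy hcont.continuousOn (a := y) (b := x)
          ⟨hneg.le, hy.le⟩
        obtain ⟨z, _, hz⟩ := this
        exact hroot z hz

end GQaux2

namespace GQuniq
open Polynomial GQaux

variable {d : ℕ} {N N' : Finset ℝ} {w w' : ℝ → ℝ}

lemma nodes_eq (hd : 0 < d)
    (hw : ∀ x ∈ N, 0 < w x) (hw' : ∀ x ∈ N', 0 < w' x)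
    (hN : N.card ≤ d) (hN' : N'.card ≤ d)
    (hE : ∀ f : ℝ[X], f.natDegree ≤ 2 * d - 1 →
      ∑ x ∈ N, w x * f.eval x = ∑ x ∈ N', w' x * f.eval x)
    (hle : N'.card ≤ N.card) : N = N' := by
  classical
  rcases Nat.eq_zero_or_pos N.card with hn0 | hn0
  · have h1 : N = ∅ := Finset.card_eq_zero.1 hn0
    have h2 : N' = ∅ := Finset.card_eq_zero.1 (by omega)
    rw [h1, h2]
  set n := N.card with hn
  set n' := N'.card with hn'
  set q : ℝ[X] := ∏ a ∈ N, (X - C a) with hq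
  set q' : ℝ[X] := ∏ a ∈ N', (X - C a) with hq'
  set k := n - n' with hk
  set s : ℝ[X] := q - X ^ k * q' with hs
  have hqm : q.Monic := monicP N
  have hq'm : q'.Monic := monicP N'
  have hXqm : (X ^ k * q' : ℝ[X]).Monic := (monic_X_pow k).mul hq'm
  have hqdeg : q.natDegree = n := ndegP N
  have hq'deg : q'.natDegree = n' := ndegP N'
  have hXqdeg : (X ^ k * q' : ℝ[X]).natDegree = n := by
    rw [natDegree_mul (monic_X_pow k).ne_zero hq'm.ne_zero, natDegree_X_pow, hq'deg]
    omega
  have hsdeg : s.degree < (n : WithBot ℕ) := by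
    have hdeq : q.degree = (X ^ k * q' : ℝ[X]).degree := by
      rw [degree_eq_natDegree hqm.ne_zero, degree_eq_natDegree hXqm.ne_zero, hqdeg, hXqdeg]
    have := degree_sub_lt hdeq hqm.ne_zero
        (by simp [hqm.leadingCoeff, hXqm.leadingCoeff])
    rwa [degree_eq_natDegree hqm.ne_zero, hqdeg] at this
  have hsnd : s.natDegree ≤ n - 1 := by
    rcases eq_or_ne s 0 with h0 | h0
    · simp [h0]
    · have := (natDegree_lt_iff_degree_lt h0).2 hsdeg
      omega
  -- key sum is zero
  have hss : (s * s : ℝ[X]) = q * s - X ^ k * q' * s := by ring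
  have hsum2 : ∑ x ∈ N, w x * (X ^ k * q' * s).eval x = 0 := by
    rw [hE _ (by
      have h1 : (X ^ k * q' * s : ℝ[X]).natDegree ≤ k + n' + s.natDegree := by
        refine (natDegree_mul_le).trans ?_
        have := natDegree_mul_le (p := (X : ℝ[X]) ^ k) (q := q')
        rw [natDegree_X_pow, hq'deg] at this
        omega
      omega)]
    refine Finset.sum_eq_zero fun x hx => ?_
    have : q'.eval x = 0 := evalP.2 hx
    simp [eval_mul, this]
  have hsum1 : ∑ x ∈ N, w x * (q * s).eval x = 0 := by
    refine Finset.sum_eq_zero fun x hx => ?_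
    have : q.eval x = 0 := evalP.2 hx
    simp [eval_mul, this]
  have hzero : ∑ x ∈ N, w x * (s.eval x * s.eval x) = 0 := by
    have : ∀ x ∈ N, w x * (s.eval x * s.eval x)
        = w x * (q * s).eval x - w x * (X ^ k * q' * s).eval x := by
      intro x _
      rw [← mul_sub]
      congr 1
      rw [← eval_mul, ← eval_sub, ← hss, eval_mul]
    rw [Finset.sum_congr rfl this, Finset.sum_sub_distrib, hsum1, hsum2, sub_zero]
  have hvanish : ∀ x ∈ N, s.eval x = 0 := by
    intro x hx
    have hterm := (Finset.sum_eq_zero_iff_of_nonneg (fun y hy =>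
      mul_nonneg (hw y hy).le (mul_self_nonneg _))).1 hzero x hx
    have := mul_eq_zero.1 hterm
    rcases this with h | h
    · exact absurd h (hw x hx).ne'
    · exact mul_self_eq_zero.1 h
  have hs0 : s = 0 := vanish_eq_zero hvanish (by omega)
  have hqq : q = X ^ k * q' := by rwa [sub_eq_zero] at hs0
  have hq0 : q ≠ 0 := hqm.ne_zero
  have hrm : rootMultiplicity 0 q ≤ 1 := by
    rw [← count_roots, hq, roots_prod_X_sub_C]
    exact Multiset.nodup_iff_count_le_one.1 N.nodup 0
  have hk1 : k ≤ 1 := by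
    have : ((X : ℝ[X]) - C 0) ^ k ∣ q := ⟨q', by rw [hqq]; simp⟩
    have := (le_rootMultiplicity_iff hq0).2 this
    omega
  rcases Nat.le_one_iff_eq_zero_or_eq_one.1 hk1 with hk0 | hk0
  · -- k = 0 : q = q', so N = N'
    rw [hk0, pow_zero, one_mul] at hqq
    have hqq' : (∏ a ∈ N, (X - C a)) = ∏ a ∈ N', (X - C a) := hqq
    ext x
    rw [← evalP (s := N), ← evalP (s := N'), hqq']
  · -- k = 1 : contradiction
    exfalso
    rw [hk0, pow_one] at hqq
    have hqq' : (∏ a ∈ N, (X - C a)) = X * q' := hqq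
    have h0N : (0 : ℝ) ∈ N := by
      rw [← evalP (s := N), hqq']; simp
    have h0N' : q'.eval 0 ≠ 0 := by
      intro h
      have : ((X : ℝ[X]) - C 0) ^ 2 ∣ q := by
        have hdvd : (X : ℝ[X]) ∣ q' := by
          simpa using dvd_iff_isRoot.2 h
        obtain ⟨c, hc⟩ := hdvd
        refine ⟨c, ?_⟩
        rw [hqq, hc]
        simp only [map_zero, sub_zero]
        ring
      have := (le_rootMultiplicity_iff hq0).2 this
      omega
    have hEq := hE (q' * q') (by
      have : (q' * q' : ℝ[X]).natDegree ≤ n' + n' := by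
        refine natDegree_mul_le.trans (by omega)
      have hn'lt : n' < n := by
        have : n = 1 + n' := by omega
        omega
      omega)
    have hrhs : ∑ x ∈ N', w' x * (q' * q').eval x = 0 := by
      refine Finset.sum_eq_zero fun x hx => ?_
      have : q'.eval x = 0 := evalP.2 hx
      simp [this]
    rw [hrhs] at hEq
    have hterm := (Finset.sum_eq_zero_iff_of_nonneg (fun y hy => by
      have := (hw y hy).le
      simp only [eval_mul]
      exact mul_nonneg this (mul_self_nonneg _))).1 hEq 0 h0N
    simp only [eval_mul] at hterm
    rcases mul_eq_zero.1 hterm with h | h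
    · exact (hw 0 h0N).ne' h
    · exact h0N' (mul_self_eq_zero.1 h)

lemma weights_eq (hd : 0 < d)
    (hN : N.card ≤ d)
    (hE : ∀ f : ℝ[X], f.natDegree ≤ 2 * d - 1 →
      ∑ x ∈ N, w x * f.eval x = ∑ x ∈ N, w' x * f.eval x)
    {x₀ : ℝ} (hx₀ : x₀ ∈ N) : w x₀ = w' x₀ := by
  classical
  set r : ℝ[X] := ∏ a ∈ N.erase x₀, (X - C a) with hr
  have hrdeg : r.natDegree = (N.erase x₀).card := ndegP _
  have hcard : (N.erase x₀).card = N.card - 1 := Finset.card_erase_of_mem hx₀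
  have hEq := hE (r * r) (by
    have := natDegree_mul_le (p := r) (q := r)
    have h1 : 1 ≤ N.card := Finset.card_pos.2 ⟨x₀, hx₀⟩
    omega)
  have hz : ∀ x ∈ N, x ≠ x₀ → r.eval x = 0 := fun x hx hne =>
    evalP.2 (Finset.mem_erase.2 ⟨hne, hx⟩)
  have hsingle : ∀ v : ℝ → ℝ, ∑ x ∈ N, v x * (r * r).eval x
      = v x₀ * (r.eval x₀ * r.eval x₀) := by
    intro v
    rw [Finset.sum_eq_single_of_mem x₀ hx₀ (fun x hx hne => by simp [hz x hx hne])]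
    simp
  rw [hsingle w, hsingle w'] at hEq
  have hr0 : r.eval x₀ ≠ 0 := fun h => (Finset.notMem_erase x₀ N) (evalP.1 h)
  exact mul_right_cancel₀ (mul_ne_zero hr0 hr0) hEq

end GQuniq

namespace GQexist
open Polynomial GQaux GQaux2

variable {d : ℕ} {μ : Measure ℝ}

lemma atomic_rule
    (hInt : ∀ p : ℝ[X], p.natDegree ≤ 2 * d - 1 → Integrable (fun x => p.eval x) μ)
    (Z : Finset ℝ) (hZ : μ ((↑Z : Set ℝ)ᶜ) = 0) :
    ∃ (N : Finset ℝ) (w : ℝ → ℝ), N ⊆ Z ∧ (∀ x ∈ N, 0 < w x) ∧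
      ∀ f : ℝ[X], f.natDegree ≤ 2 * d - 1 →
        ∫ x, f.eval x ∂μ = ∑ x ∈ N, w x * f.eval x := by
  classical
  set w : ℝ → ℝ := fun x => (μ {x}).toReal with hwdef
  refine ⟨Z.filter (fun x => 0 < w x), w, Finset.filter_subset _ _,
    fun x hx => (Finset.mem_filter.1 hx).2, fun f hf => ?_⟩
  have hae : ∀ᵐ x ∂μ, x ∈ (↑Z : Set ℝ) := by
    rw [MeasureTheory.ae_iff]
    exact hZ
  have hres : μ.restrict (↑Z : Set ℝ) = μ := Measure.restrict_eq_self_of_ae_mem hae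
  have h1 : ∫ x, f.eval x ∂μ = ∫ x in (↑Z : Set ℝ), f.eval x ∂μ := by rw [hres]
  rw [h1, setIntegral_finset Z ((hInt f hf).integrableOn)]
  have h2 : ∀ x, μ.real {x} • f.eval x = w x * f.eval x := fun x => by rw [smul_eq_mul]; rfl
  simp_rw [h2]
  refine (Finset.sum_filter_of_ne fun x _ hne => ?_).symm
  have hne0 : w x ≠ 0 := fun h => hne (by rw [h, zero_mul])
  exact lt_of_le_of_ne ENNReal.toReal_nonneg (Ne.symm hne0)

end GQexist

namespace GQtest
open Polynomial GQaux GQaux2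

variable {d : ℕ} {μ : Measure ℝ}

lemma orth_poly (hd : 0 < d)
    (hInt : ∀ p : ℝ[X], p.natDegree ≤ 2 * d - 1 → Integrable (fun x => p.eval x) μ)
    (hpos : ∀ g : ℝ[X], g ≠ 0 → g.natDegree ≤ d - 1 → 0 < ∫ x, (g * g).eval x ∂μ) :
    ∃ pd : ℝ[X], pd.Monic ∧ pd.natDegree = d ∧
      ∀ r : ℝ[X], r.natDegree ≤ d - 1 → ∫ x, (pd * r).eval x ∂μ = 0 := by
  classical
  have hmem : ∀ r : ℝ[X], r.natDegree ≤ d - 1 → r ∈ Polynomial.degreeLT ℝ d := by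
    intro r hr
    rw [Polynomial.mem_degreeLT]
    rcases eq_or_ne r 0 with rfl | h0
    · rw [degree_zero]
      exact WithBot.bot_lt_coe d
    · rw [degree_eq_natDegree h0, Nat.cast_lt]
      omega
  have hmem' : ∀ r : ℝ[X], r ∈ Polynomial.degreeLT ℝ d → r.natDegree ≤ d - 1 := by
    intro r hr
    rw [Polynomial.mem_degreeLT] at hr
    rcases eq_or_ne r 0 with rfl | h0
    · simp
    · rw [degree_eq_natDegree h0, Nat.cast_lt] at hr
      omega
  have hIntW : ∀ p q : ℝ[X], p.natDegree ≤ d → q.natDegree ≤ d - 1 →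
      Integrable (fun x => (p * q).eval x) μ := by
    intro p q hp hq
    refine hInt _ (le_trans natDegree_mul_le ?_)
    omega
  haveI : FiniteDimensional ℝ (Polynomial.degreeLT ℝ d) :=
    LinearEquiv.finiteDimensional (Polynomial.degreeLTEquiv ℝ d).symm
  set W := Polynomial.degreeLT ℝ d with hW
  have hB : ∀ (p q : W), Integrable (fun x => ((p : ℝ[X]) * (q : ℝ[X])).eval x) μ :=
    fun p q => hIntW _ _ (by have := hmem' _ p.2; omega) (hmem' _ q.2)
  set B : W →ₗ[ℝ] W →ₗ[ℝ] ℝ := LinearMap.mk₂ ℝ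
    (fun p q => ∫ x, ((p : ℝ[X]) * (q : ℝ[X])).eval x ∂μ)
    (fun m₁ m₂ n => by
      beta_reduce
      have h1 : (fun x => (((m₁ + m₂ : W) : ℝ[X]) * (n : ℝ[X])).eval x)
          = fun x => ((m₁ : ℝ[X]) * (n : ℝ[X])).eval x + ((m₂ : ℝ[X]) * (n : ℝ[X])).eval x := by
        funext x
        simp [add_mul]
      rw [h1, integral_add (hB m₁ n) (hB m₂ n)])
    (fun c m n => by
      beta_reduce
      have h1 : (fun x => (((c • m : W) : ℝ[X]) * (n : ℝ[X])).eval x)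
          = fun x => c * (((m : ℝ[X]) * (n : ℝ[X])).eval x) := by
        funext x
        simp [Polynomial.smul_eq_C_mul, mul_assoc]
      rw [h1, MeasureTheory.integral_const_mul, smul_eq_mul])
    (fun m n₁ n₂ => by
      beta_reduce
      have h1 : (fun x => ((m : ℝ[X]) * ((n₁ + n₂ : W) : ℝ[X])).eval x)
          = fun x => ((m : ℝ[X]) * (n₁ : ℝ[X])).eval x + ((m : ℝ[X]) * (n₂ : ℝ[X])).eval x := by
        funext x
        simp [mul_add]
      rw [h1, integral_add (hB m n₁) (hB m n₂)])
    (fun c m n => by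
      beta_reduce
      have h1 : (fun x => ((m : ℝ[X]) * ((c • n : W) : ℝ[X])).eval x)
          = fun x => c * (((m : ℝ[X]) * (n : ℝ[X])).eval x) := by
        funext x
        simp [Polynomial.smul_eq_C_mul]
        ring
      rw [h1, MeasureTheory.integral_const_mul, smul_eq_mul]) with hBdef
  have hBnd : LinearMap.BilinForm.Nondegenerate B := by
    refine LinearMap.BilinForm.Nondegenerate.ofSeparatingLeft ?_
    intro p hp
    by_contra hp0
    have hp1 : (p : ℝ[X]) ≠ 0 := fun h => hp0 (Subtype.ext h)
    have := hpos (p : ℝ[X]) hp1 (hmem' _ p.2)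
    have h2 := hp p
    simp only [hBdef, LinearMap.mk₂_apply] at h2
    rw [h2] at this
    exact lt_irrefl _ this
  set φ : Module.Dual ℝ W := {
    toFun := fun r => ∫ x, ((X : ℝ[X]) ^ d * (r : ℝ[X])).eval x ∂μ
    map_add' := fun r₁ r₂ => by
      beta_reduce
      have h1 : (fun x => (((X : ℝ[X]) ^ d) * ((r₁ + r₂ : W) : ℝ[X])).eval x)
          = fun x => ((X : ℝ[X]) ^ d * (r₁ : ℝ[X])).eval x
            + ((X : ℝ[X]) ^ d * (r₂ : ℝ[X])).eval x := by
        funext x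
        simp [mul_add]
      rw [h1]
      exact integral_add (hIntW _ _ (by simp) (hmem' _ r₁.2))
        (hIntW _ _ (by simp) (hmem' _ r₂.2))
    map_smul' := fun c r => by
      simp only [AddHom.coe_mk, RingHom.id_apply]
      beta_reduce
      have h1 : (fun x => (((X : ℝ[X]) ^ d) * ((c • r : W) : ℝ[X])).eval x)
          = fun x => c * (((X : ℝ[X]) ^ d) * (r : ℝ[X])).eval x := by
        funext x
        simp [Polynomial.smul_eq_C_mul]
        ring
      rw [h1, MeasureTheory.integral_const_mul]
      simp } with hφdef
  set g : W := (LinearMap.BilinForm.toDual B hBnd).symm φ with hgdef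
  have hg : ∀ r : W, B g r = φ r := by
    intro r
    have : LinearMap.BilinForm.toDual B hBnd g = φ := by
      rw [hgdef, LinearEquiv.apply_symm_apply]
    rw [← this]
    rfl
  refine ⟨X ^ d - (g : ℝ[X]), ?_, ?_, ?_⟩
  · apply monic_X_pow_sub
    rw [← Polynomial.mem_degreeLT]
    exact g.2
  · have hdlt : degree (g : ℝ[X]) < degree ((X : ℝ[X]) ^ d) := by
      rw [degree_X_pow]
      exact Polynomial.mem_degreeLT.1 g.2
    have := degree_sub_eq_left_of_degree_lt hdlt
    rw [degree_X_pow] at this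
    exact natDegree_eq_of_degree_eq_some this
  · intro r hr
    have hrW : r ∈ W := hmem r hr
    have h1 : (fun x => ((X ^ d - (g : ℝ[X])) * r).eval x)
        = fun x => ((X : ℝ[X]) ^ d * r).eval x - ((g : ℝ[X]) * r).eval x := by
      funext x
      simp [sub_mul]
    rw [h1, integral_sub (hIntW _ _ (by simp) hr) (hIntW _ _ (by have := hmem' _ g.2; omega) hr)]
    have := hg ⟨r, hrW⟩
    simp only [hBdef, LinearMap.mk₂_apply, hφdef, LinearMap.coe_mk, AddHom.coe_mk] at this
    rw [this]
    ring

end GQtest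


namespace GQtest2
open Polynomial GQtest GQaux GQaux2

variable {d : ℕ} {μ : Measure ℝ}


lemma exist_rule (hd : 0 < d)
    (hInt : ∀ p : ℝ[X], p.natDegree ≤ 2 * d - 1 → Integrable (fun x => p.eval x) μ)
    (hAt : ∀ Z : Finset ℝ, Z.card ≤ d → μ ((↑Z : Set ℝ)ᶜ) ≠ 0) :
    ∃ (N : Finset ℝ) (w : ℝ → ℝ), N.card ≤ d ∧ (∀ x ∈ N, 0 < w x) ∧
      ∀ f : ℝ[X], f.natDegree ≤ 2 * d - 1 →
        ∫ x, f.eval x ∂μ = ∑ x ∈ N, w x * f.eval x := by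
  classical
  have hnnSq : ∀ (g : ℝ[X]) (x : ℝ), 0 ≤ (g * g).eval x := fun g x => by
    rw [eval_mul]; exact mul_self_nonneg _
  have hIntSq : ∀ g : ℝ[X], g.natDegree ≤ d - 1 → Integrable (fun x => (g * g).eval x) μ :=
    fun g hg => hInt _ (natDegree_mul_le.trans (by omega))
  have hconc : ∀ h : ℝ[X], h ≠ 0 → h.natDegree ≤ 2 * d - 1 → (∀ x, 0 ≤ h.eval x) →
      (∫ x, h.eval x ∂μ) = 0 → μ ((↑h.roots.toFinset : Set ℝ)ᶜ) = 0 := by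
    intro h h0 hdeg hnn hzero
    have hae := (integral_eq_zero_iff_of_nonneg hnn (hInt _ hdeg)).1 hzero
    have hμ0 : μ {x : ℝ | ¬ h.eval x = 0} = 0 := by
      have := hae
      rw [Filter.EventuallyEq, MeasureTheory.ae_iff] at this
      simpa using this
    refine measure_mono_null ?_ hμ0
    intro x hx
    simp only [Set.mem_setOf_eq]
    intro hev
    exact hx (Finset.mem_coe.2 (Multiset.mem_toFinset.2 ((mem_roots h0).2 hev)))
  have hpos : ∀ g : ℝ[X], g ≠ 0 → g.natDegree ≤ d - 1 → 0 < ∫ x, (g * g).eval x ∂μ := by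
    intro g hg0 hgd
    rcases lt_or_eq_of_le (integral_nonneg (f := fun x => (g * g).eval x) (hnnSq g)) with h | h
    · exact h
    exfalso
    have hgg0 : g * g ≠ 0 := mul_ne_zero hg0 hg0
    have hμ := hconc (g * g) hgg0 (natDegree_mul_le.trans (by omega)) (hnnSq g) h.symm
    have heqr : (g * g).roots.toFinset = g.roots.toFinset := by
      rw [roots_mul hgg0, Multiset.toFinset_add, Finset.union_self]
    rw [heqr] at hμ
    refine hAt g.roots.toFinset ?_ hμ
    refine le_trans (Multiset.toFinset_card_le _) (le_trans (card_roots' _) ?_)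
    omega
  obtain ⟨pd, hpdM, hpdD, horth⟩ := orth_poly hd hInt hpos
  set N := pd.roots.toFinset with hNdef
  have hNle : N.card ≤ d := le_trans (Multiset.toFinset_card_le _)
    (le_trans (card_roots' pd) (le_of_eq hpdD))
  have hrootN : ∀ a ∈ N, pd.eval a = 0 := fun a ha =>
    isRoot_of_mem_roots (Multiset.mem_toFinset.1 ha)
  have hNcard : N.card = d := by
    by_contra hne
    have hlt : N.card ≤ d - 1 := by omega
    set T := N.filter (fun a => ¬ Even (rootMultiplicity a pd)) with hTdef
    set r : ℝ[X] := ∏ a ∈ T, (X - C a) with hrdef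
    have hrd : r.natDegree = T.card := ndegP T
    have hTle : T.card ≤ d - 1 := le_trans (Finset.card_filter_le _ _) hlt
    have hf0 : pd * r ≠ 0 := mul_ne_zero hpdM.ne_zero (monicP T).ne_zero
    have heven : ∀ a : ℝ, Even (rootMultiplicity a (pd * r)) := by
      intro a
      rw [rootMultiplicity_mul hf0]
      have hrm : rootMultiplicity a r = if a ∈ T then 1 else 0 := by
        rw [← count_roots, hrdef, roots_prod_X_sub_C]
        split_ifs with h
        · exact Multiset.count_eq_one_of_mem T.nodup h
        · exact Multiset.count_eq_zero.2 (by simpa using h)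
      by_cases haT : a ∈ T
      · rw [hrm, if_pos haT]
        have hodd : ¬ Even (rootMultiplicity a pd) := (Finset.mem_filter.1 haT).2
        rcases Nat.even_or_odd (rootMultiplicity a pd) with h | h
        · exact absurd h hodd
        · exact h.add_one
      · rw [hrm, if_neg haT, add_zero]
        by_cases haN : a ∈ N
        · rcases Nat.even_or_odd (rootMultiplicity a pd) with h | h
          · exact h
          · exact absurd (Finset.mem_filter.2 ⟨haN, Nat.not_even_iff_odd.mpr h⟩) haT
        · have h0 : rootMultiplicity a pd = 0 := by
            apply rootMultiplicity_eq_zero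
            intro hroot
            exact haN (Multiset.mem_toFinset.2 ((mem_roots hpdM.ne_zero).2 hroot))
          rw [h0]
          exact Even.zero
    have hnn : ∀ x, 0 ≤ (pd * r).eval x := by
      refine nonnegP _ _ rfl ?_ heven
      rw [(hpdM.mul (monicP T)).leadingCoeff]
      norm_num
    have hdegpr : (pd * r).natDegree ≤ 2 * d - 1 := by
      refine natDegree_mul_le.trans ?_
      rw [hpdD, hrd]
      omega
    have hint0 : ∫ x, (pd * r).eval x ∂μ = 0 := horth r (by omega)
    have hμ0 := hconc (pd * r) hf0 hdegpr hnn hint0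
    have hμN : μ ((↑N : Set ℝ)ᶜ) = 0 := by
      refine measure_mono_null ?_ hμ0
      intro x hx
      intro hmem
      apply hx
      have hroot := (mem_roots hf0).1 (Multiset.mem_toFinset.1 (Finset.mem_coe.1 hmem))
      rw [IsRoot, eval_mul] at hroot
      refine Finset.mem_coe.2 (Multiset.mem_toFinset.2 ?_)
      rcases mul_eq_zero.1 hroot with h | h
      · exact (mem_roots hpdM.ne_zero).2 h
      · have hxT : x ∈ T := by
          have hx' : x ∈ r.roots := (mem_roots (monicP T).ne_zero).2 h
          rw [hrdef, roots_prod_X_sub_C] at hx'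
          exact hx'
        exact (mem_roots hpdM.ne_zero).2 (hrootN x (Finset.mem_filter.1 hxT).1)
    exact hAt N hNle hμN
  have hdvd := dvdP hpdM.ne_zero hrootN
  have hpd_eq : pd = ∏ a ∈ N, (X - C a) :=
    eq_of_monic_of_dvd_of_natDegree_le (monicP N) hpdM hdvd (by rw [hpdD, ndegP, hNcard])
  have hvs : Set.InjOn id (↑N : Set ℝ) := Set.injOn_id _
  set ℓ : ℝ → ℝ[X] := fun x => Lagrange.basis N id x with hℓdef
  have hℓdeg : ∀ x ∈ N, (ℓ x).natDegree = d - 1 := fun x hx => by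
    rw [hℓdef]
    rw [Lagrange.natDegree_basis hvs hx, hNcard]
  set w : ℝ → ℝ := fun x => ∫ t, (ℓ x * ℓ x).eval t ∂μ with hwdef
  have hℓne : ∀ x ∈ N, ℓ x ≠ 0 := fun x hx => Lagrange.basis_ne_zero hvs hx
  have hw : ∀ x ∈ N, 0 < w x := fun x hx => hpos (ℓ x) (hℓne x hx) (le_of_eq (hℓdeg x hx))
  have hIntℓ : ∀ x ∈ N, Integrable (fun t => (ℓ x).eval t) μ := fun x hx =>
    hInt _ (by rw [hℓdeg x hx]; omega)
  have hLℓ : ∀ x ∈ N, ∫ t, (ℓ x).eval t ∂μ = w x := by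
    intro x hx
    have hvan : ∀ a ∈ N, (ℓ x * ℓ x - ℓ x).eval a = 0 := by
      intro a ha
      by_cases hax : x = a
      · subst hax
        have h1 : (ℓ x).eval x = 1 := Lagrange.eval_basis_self hvs hx
        simp [eval_sub, eval_mul, h1]
      · have h0 : (ℓ x).eval a = 0 := Lagrange.eval_basis_of_ne (s := N) (v := id) hax ha
        simp [eval_sub, eval_mul, h0]
    rcases eq_or_ne (ℓ x * ℓ x - ℓ x) 0 with hz | hz
    · have heq : ℓ x * ℓ x = ℓ x := by rwa [sub_eq_zero] at hz
      simp only [hwdef]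
      rw [heq]
    · obtain ⟨c, hc⟩ : pd ∣ (ℓ x * ℓ x - ℓ x) := hpd_eq ▸ dvdP hz hvan
      have hc0 : c ≠ 0 := by
        rintro rfl
        rw [mul_zero] at hc
        exact hz hc
      have hcdeg : c.natDegree ≤ d - 1 := by
        have h2 : (ℓ x * ℓ x - ℓ x).natDegree ≤ 2 * d - 2 := by
          refine (natDegree_sub_le _ _).trans ?_
          have h3 := natDegree_mul_le (p := ℓ x) (q := ℓ x)
          have h4 := hℓdeg x hx
          refine max_le ?_ ?_ <;> omega
        rw [hc, natDegree_mul hpdM.ne_zero hc0, hpdD] at h2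
        omega
      have h0 := horth c hcdeg
      rw [← hc] at h0
      have hfun : (fun t => (ℓ x * ℓ x - ℓ x).eval t)
          = fun t => (ℓ x * ℓ x).eval t - (ℓ x).eval t := funext fun t => by simp
      rw [hfun] at h0
      rw [integral_sub (hIntSq _ (le_of_eq (hℓdeg x hx))) (hIntℓ x hx)] at h0
      have h5 := sub_eq_zero.1 h0
      simp only [hwdef]
      exact h5.symm
  refine ⟨N, w, hNle, hw, ?_⟩
  intro f hf
  have key := modByMonic_add_div f pd
  have hqdeg : (f /ₘ pd).natDegree ≤ d - 1 := by
    rw [natDegree_divByMonic f hpdM, hpdD]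
    omega
  have hrmdeg : (f %ₘ pd).natDegree ≤ d - 1 := by
    have h1 : (f %ₘ pd).degree < pd.degree := degree_modByMonic_lt f hpdM
    rw [degree_eq_natDegree hpdM.ne_zero, hpdD] at h1
    rcases eq_or_ne (f %ₘ pd) 0 with h0 | h0
    · simp [h0]
    · rw [degree_eq_natDegree h0, Nat.cast_lt] at h1
      omega
  have hIntq : Integrable (fun x => (pd * (f /ₘ pd)).eval x) μ :=
    hInt _ (natDegree_mul_le.trans (by rw [hpdD]; omega))
  have hIntrm : Integrable (fun x => (f %ₘ pd).eval x) μ := hInt _ (by omega)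
  have h1 : ∫ x, f.eval x ∂μ
      = ∫ x, (pd * (f /ₘ pd)).eval x ∂μ + ∫ x, (f %ₘ pd).eval x ∂μ := by
    rw [← integral_add hIntq hIntrm]
    congr 1
    funext x
    conv_lhs => rw [← key]
    simp [eval_add]
    ring
  rw [h1, horth _ hqdeg, zero_add]
  have hlt : (f %ₘ pd).degree < (N.card : WithBot ℕ) := by
    rw [hNcard]
    rcases eq_or_ne (f %ₘ pd) 0 with h0 | h0
    · rw [h0, degree_zero]
      exact WithBot.bot_lt_coe d
    · rw [degree_eq_natDegree h0, Nat.cast_lt]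
      omega
  have hinterp : f %ₘ pd = ∑ a ∈ N, C ((f %ₘ pd).eval a) * ℓ a := by
    have h6 := Lagrange.eq_interpolate (s := N) (v := id) hvs hlt
    rw [Lagrange.interpolate_apply] at h6
    simpa using h6
  have h2 : (fun x => (f %ₘ pd).eval x)
      = fun x => ∑ a ∈ N, (f %ₘ pd).eval a * (ℓ a).eval x := by
    funext x
    conv_lhs => rw [hinterp]
    rw [eval_finset_sum]
    exact Finset.sum_congr rfl fun a _ => by rw [eval_mul, eval_C]
  rw [h2, integral_finset_sum N (fun a ha => (hIntℓ a ha).const_mul _)]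
  refine Finset.sum_congr rfl fun a ha => ?_
  rw [MeasureTheory.integral_const_mul, hLℓ a ha]
  have hfa : (f %ₘ pd).eval a = f.eval a := by
    conv_rhs => rw [← key]
    simp [eval_add, eval_mul, hrootN a ha]
  rw [hfa]
  ring

end GQtest2


end AuxGQ

open Polynomial in
/-- Theorem `eindeutig` (existence and uniqueness of the Gaussian quadrature rule): every
`L ∈ M_{2d-1}(ℝ)` has exactly one quadrature rule with at most `d` nodes. -/
theorem stmt_18 (d : ℕ) (hd : 0 < d)
    (L : Module.Dual ℝ (UPolyLE (2 * d - 1))) (hL : L ∈ UMomentCone (2 * d - 1)) :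
    (∃ (N : Finset ℝ) (w : ℝ → ℝ), UIsQuadratureRule L N w ∧ N.card ≤ d) ∧
    ∀ (N : Finset ℝ) (w : ℝ → ℝ) (N' : Finset ℝ) (w' : ℝ → ℝ),
      UIsQuadratureRule L N w → N.card ≤ d →
      UIsQuadratureRule L N' w' → N'.card ≤ d →
      N = N' ∧ ∀ x ∈ N, w x = w' x := by
  classical
  obtain ⟨μ, hInt, hμL⟩ := hL
  have hmemdeg : ∀ p : UPolyLE (2 * d - 1), (p : ℝ[X]).natDegree ≤ 2 * d - 1 := by
    intro p
    exact Polynomial.natDegree_le_iff_degree_le.2 (Polynomial.mem_degreeLE.1 p.2)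
  have hmk : ∀ f : ℝ[X], f.natDegree ≤ 2 * d - 1 → f ∈ UPolyLE (2 * d - 1) := by
    intro f hf
    exact Polynomial.mem_degreeLE.2 (Polynomial.natDegree_le_iff_degree_le.1 hf)
  constructor
  · -- existence
    have main : ∃ (N : Finset ℝ) (w : ℝ → ℝ), N.card ≤ d ∧ (∀ x ∈ N, 0 < w x) ∧
        ∀ f : ℝ[X], f.natDegree ≤ 2 * d - 1 →
          ∫ x, f.eval x ∂μ = ∑ x ∈ N, w x * f.eval x := by
      by_cases hAt : ∃ Z : Finset ℝ, Z.card ≤ d ∧ μ ((↑Z : Set ℝ)ᶜ) = 0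
      · obtain ⟨Z, hZd, hZ0⟩ := hAt
        obtain ⟨N, w, hNZ, hw, hrule⟩ := GQexist.atomic_rule hInt Z hZ0
        exact ⟨N, w, le_trans (Finset.card_le_card hNZ) hZd, hw, hrule⟩
      · push_neg at hAt
        obtain ⟨N, w, hNd, hw, hrule⟩ := GQtest2.exist_rule hd hInt hAt
        exact ⟨N, w, hNd, hw, hrule⟩
    obtain ⟨N, w, hNd, hw, hrule⟩ := main
    refine ⟨N, w, ⟨hw, fun p => ?_⟩, hNd⟩
    rw [hμL p]
    exact hrule _ (hmemdeg p)
  · -- uniqueness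
    intro N w N' w' hq hNd hq' hN'd
    obtain ⟨hw, hrule⟩ := hq
    obtain ⟨hw', hrule'⟩ := hq'
    have hE : ∀ f : ℝ[X], f.natDegree ≤ 2 * d - 1 →
        ∑ x ∈ N, w x * f.eval x = ∑ x ∈ N', w' x * f.eval x := by
      intro f hf
      have h1 := hrule ⟨f, hmk f hf⟩
      have h2 := hrule' ⟨f, hmk f hf⟩
      rw [← h1, ← h2]
    have hNN' : N = N' := by
      rcases le_total N'.card N.card with hle | hle
      · exact GQuniq.nodes_eq hd hw hw' hNd hN'd hE hle
      · exact (GQuniq.nodes_eq hd hw' hw hN'd hNd (fun f hf => (hE f hf).symm) hle).symm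
    subst hNN'
    exact ⟨rfl, fun x hx => GQuniq.weights_eq hd hNd hE hx⟩

end
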